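/- The sequence ω converges to 0: lim_{j→∞} ω(j) = 0. -/
import Mathlib

open Filter

/-- Contraction with vanishing perturbation tends to zero. -/
lemma contraction_tendsto_zero (a : ℝ) (ha0 : 0 ≤ a) (ha1 : a < 1)
    (x e : ℕ → ℝ) (N : ℕ)
    (hx : ∀ k, N ≤ k → x (k + 1) = a * x k + e (k + 1))
    (he : Tendsto e atTop (nhds 0)) : Tendsto x atTop (nhds 0) := by
  rw [Metric.tendsto_atTop] at he ⊢
  intro ε hε
  have h1a : 0 < 1 - a := by linarith
  obtain ⟨M0, hM0⟩ := he (ε * (1 - a) / 2) (by positivity)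
  set M := max N M0 with hM
  have key : ∀ k, |x (M + k)| ≤ a ^ k * |x M| + ε / 2 := by
    intro k
    induction k with
    | zero => simp; positivity
    | succ k ih =>
      have hxe := hx (M + k) (le_trans (le_max_left _ _) (Nat.le_add_right _ _))
      have heb : |e (M + k + 1)| < ε * (1 - a) / 2 := by
        have := hM0 (M + k + 1) (by omega)
        simpa [Real.dist_eq] using this
      have : |x (M + k + 1)| ≤ a * |x (M + k)| + |e (M + k + 1)| := by
        rw [hxe]
        refine le_trans (abs_add_le _ _) (le_of_eq ?_)
        rw [abs_mul, abs_of_nonneg ha0]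
      have h2 : a * |x (M + k)| ≤ a * (a ^ k * |x M| + ε / 2) :=
        mul_le_mul_of_nonneg_left ih ha0
      have hkk : M + (k + 1) = M + k + 1 := by omega
      rw [hkk]
      nlinarith [abs_nonneg (x M), pow_succ a k]
  have hpow : Tendsto (fun k : ℕ => a ^ k * |x M|) atTop (nhds 0) := by
    simpa using (tendsto_pow_atTop_nhds_zero_of_lt_one ha0 ha1).mul_const |x M|
  rw [Metric.tendsto_atTop] at hpow
  obtain ⟨K, hK⟩ := hpow (ε / 2) (by positivity)
  refine ⟨M + K, fun n hn => ?_⟩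
  have hxn : |x n| ≤ a ^ (n - M) * |x M| + ε / 2 := by
    have := key (n - M)
    rwa [show M + (n - M) = n by omega] at this
  have hpk : a ^ (n - M) * |x M| ≤ a ^ K * |x M| :=
    mul_le_mul_of_nonneg_right (pow_le_pow_of_le_one ha0 ha1.le (by omega)) (abs_nonneg _)
  have hK' : a ^ K * |x M| < ε / 2 := by
    have h := hK K le_rfl
    rw [Real.dist_eq, sub_zero] at h
    exact lt_of_le_of_lt (le_abs_self _) h
  rw [Real.dist_eq, sub_zero]
  linarith

/-- `ω` converges to `0`. -/
theorem omega_tendsto_zero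
    (lam lam_e : ℝ) (hlam0 : 0 < lam) (hlam1 : lam < 1)
    (hle0 : 0 < lam_e) (hle1 : lam_e < 1)
    (tbar : ℕ)
    (φ : ℕ → ℝ)
    (hφ0 : φ 0 = lam * lam_e / (lam * (tbar : ℝ) + 1))
    (hφ1 : ∀ j, j < tbar → φ (j + 1) = (1 - lam) * (1 - lam_e) * φ j)
    (hφ2 : ∀ j, tbar ≤ j → φ (j + 1) =
      (1 - lam) * (1 - lam_e) * φ j + lam * (1 - lam_e) * φ (j - tbar))
    (ω : ℕ → ℝ)
    (hω0 : ω 0 = lam_e / (lam * (tbar : ℝ) + 1))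
    (hω1 : ∀ j, 1 ≤ j → j ≤ tbar →
      ω j = (1 - lam) * (1 - lam_e) * ω (j - 1) + φ 0)
    (hω2 : ∀ j, tbar + 1 ≤ j →
      ω j = (1 - lam) * (1 - lam_e) * ω (j - 1) + φ 0
        - lam_e * ∑ l ∈ Finset.range (j - tbar), φ l) :
    Tendsto ω atTop (nhds 0) := by
  set α : ℝ := (1 - lam) * (1 - lam_e) with hα
  set β : ℝ := lam * (1 - lam_e) with hβ
  have hα0 : 0 ≤ α := by rw [hα]; nlinarith
  have hα1 : α < 1 := by rw [hα]; nlinarith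
  have hβ0 : 0 ≤ β := by rw [hβ]; nlinarith
  have hαβ : α + β = 1 - lam_e := by rw [hα, hβ]; ring
  have htb : (0:ℝ) < lam * (tbar : ℝ) + 1 := by positivity
  have hφ0pos : 0 ≤ φ 0 := by rw [hφ0]; positivity
  -- φ is nonnegative
  have hφpos : ∀ j, 0 ≤ φ j := by
    intro j
    induction j using Nat.strong_induction_on with
    | _ j ih =>
      match j with
      | 0 => exact hφ0pos
      | (k + 1) =>
        by_cases hk : k < tbar
        · rw [hφ1 k hk]; exact mul_nonneg hα0 (ih k (by omega))
        · rw [hφ2 k (by omega)]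
          exact add_nonneg (mul_nonneg hα0 (ih k (by omega)))
            (mul_nonneg hβ0 (ih (k - tbar) (by omega)))
  set P : ℕ → ℝ := fun N => ∑ l ∈ Finset.range N, φ l with hP
  have hPmono : Monotone P := by
    apply monotone_nat_of_le_succ
    intro n
    rw [hP]
    simp only [Finset.sum_range_succ]
    linarith [hφpos n]
  have hP0 : ∀ N, 0 ≤ P N := fun N => Finset.sum_nonneg fun i _ => hφpos i
  -- exact recurrence for partial sums, N ≥ tbar
  have hPrec : ∀ N, tbar ≤ N → P (N + 1) = φ 0 + α * P N + β * P (N - tbar) := by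
    intro N hN
    rw [hP]
    simp only
    rw [Finset.sum_range_succ']
    have hsplit : ∑ i ∈ Finset.range N, φ (i + 1)
        = ∑ i ∈ Finset.Ico 0 tbar, φ (i + 1) + ∑ i ∈ Finset.Ico tbar N, φ (i + 1) := by
      rw [Finset.sum_Ico_consecutive _ (Nat.zero_le _) hN, Finset.range_eq_Ico]
    have h1 : ∑ i ∈ Finset.Ico 0 tbar, φ (i + 1) = α * ∑ i ∈ Finset.Ico 0 tbar, φ i := by
      rw [Finset.mul_sum]
      exact Finset.sum_congr rfl fun i hi => hφ1 i (Finset.mem_Ico.mp hi).2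
    have h2 : ∑ i ∈ Finset.Ico tbar N, φ (i + 1)
        = α * ∑ i ∈ Finset.Ico tbar N, φ i + β * ∑ i ∈ Finset.Ico tbar N, φ (i - tbar) := by
      rw [Finset.mul_sum, Finset.mul_sum, ← Finset.sum_add_distrib]
      exact Finset.sum_congr rfl fun i hi => hφ2 i (Finset.mem_Ico.mp hi).1
    have h3 : ∑ i ∈ Finset.Ico tbar N, φ (i - tbar) = ∑ i ∈ Finset.range (N - tbar), φ i := by
      rw [Finset.sum_Ico_eq_sum_range]
      exact Finset.sum_congr rfl fun i _ => by congr 1; omega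
    have h4 : ∑ i ∈ Finset.Ico 0 tbar, φ i + ∑ i ∈ Finset.Ico tbar N, φ i
        = ∑ i ∈ Finset.range N, φ i := by
      rw [Finset.sum_Ico_consecutive _ (Nat.zero_le _) hN, Finset.range_eq_Ico]
    rw [hsplit, h1, h2, h3, ← h4]
    ring
  -- step inequality for all N
  have hPstep : ∀ N, P (N + 1) ≤ φ 0 + (1 - lam_e) * P N := by
    intro N
    by_cases hN : tbar ≤ N
    · rw [hPrec N hN]
      have := hPmono (Nat.sub_le N tbar)
      nlinarith [hP0 (N - tbar)]
    · have : P (N + 1) = φ 0 + α * P N := by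
        rw [hP]; simp only
        rw [Finset.sum_range_succ']
        have : ∑ i ∈ Finset.range N, φ (i + 1) = α * ∑ i ∈ Finset.range N, φ i := by
          rw [Finset.mul_sum]
          exact Finset.sum_congr rfl fun i hi =>
            hφ1 i (by have := Finset.mem_range.mp hi; omega)
        rw [this]; ring
      rw [this]
      nlinarith [hP0 N]
  have hPbdd : ∀ N, P N ≤ φ 0 / lam_e := by
    intro N
    induction N with
    | zero => simp [hP]; positivity
    | succ N ih =>
      have := hPstep N
      have h1 : φ 0 + (1 - lam_e) * (φ 0 / lam_e) = φ 0 / lam_e := by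
        field_simp; ring
      nlinarith [hP0 N]
  -- P converges to its supremum L
  have hbdd : BddAbove (Set.range P) := ⟨φ 0 / lam_e, by rintro _ ⟨N, rfl⟩; exact hPbdd N⟩
  set L : ℝ := ⨆ n, P n with hL
  have hPlim : Tendsto P atTop (nhds L) := tendsto_atTop_ciSup hPmono hbdd
  have hPsub : Tendsto (fun N => P (N - tbar)) atTop (nhds L) :=
    hPlim.comp (tendsto_sub_atTop_nat tbar)
  -- identify L
  have hLid : L = φ 0 + α * L + β * L := by
    have h1 : Tendsto (fun N => P (N + 1)) atTop (nhds L) :=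
      hPlim.comp (tendsto_add_atTop_nat 1)
    have h2 : Tendsto (fun N => φ 0 + α * P N + β * P (N - tbar)) atTop
        (nhds (φ 0 + α * L + β * L)) :=
      (tendsto_const_nhds.add (hPlim.const_mul α)).add (hPsub.const_mul β)
    refine tendsto_nhds_unique h1 (h2.congr' ?_)
    filter_upwards [eventually_ge_atTop tbar] with N hN
    exact (hPrec N hN).symm
  have hLval : lam_e * L = φ 0 := by
    linear_combination hLid + L * hαβ
  -- the perturbation tends to 0
  have he : Tendsto (fun j => φ 0 - lam_e * P (j - tbar)) atTop (nhds 0) := by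
    have h := Tendsto.sub
      (tendsto_const_nhds : Tendsto (fun _ : ℕ => φ 0) atTop (nhds (φ 0)))
      (hPsub.const_mul lam_e)
    rwa [show φ 0 - lam_e * L = 0 by linarith] at h
  -- apply the contraction lemma
  apply contraction_tendsto_zero α hα0 hα1 ω
    (fun j => φ 0 - lam_e * P (j - tbar)) tbar _ he
  intro k hk
  have := hω2 (k + 1) (by omega)
  rw [show k + 1 - 1 = k by omega] at this
  rw [this, hP]
  ring
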